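/- Let G : ℕ → ℂ satisfy G(i+2) = G(i+1) + G(i) for all i ≥ 0, and define Ā : ℕ → ℚ recursively by Ā(0) = 1 and Ā(p) = ∑_{j=0}^{p−1} C(p, j)·(2^{p−j} − 1)·Ā(j) for p ≥ 1. Then for all nonnegative integers k and r, ∑_{j=0}^{k} (−1)^j · j^r · G(j) = G(0) · ∑_{m=0}^{r} C(r, m)·(δ_{r,m} + 1)·Ā(m) − G(1) · ∑_{m=0}^{r} C(r, m)·Ā(m) − (−1)^k·G(k) · ∑_{m=0}^{r} C(r, m)·(k+2)^m·Ā(r−m) + (−1)^k·G(k+1) · ∑_{m=0}^{r} C(r, m)·(k+1)^m·Ā(r−m), with the convention 0⁰ = 1. -/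

import Mathlib

open Finset

lemma refl_sum (A : ℕ → ℚ) (n : ℕ) (c : ℂ) :
    ∑ t ∈ range (n+1), (n.choose t : ℂ) * c ^ t * (A (n - t) : ℂ)
    = ∑ j ∈ range (n+1), (n.choose j : ℂ) * c ^ (n - j) * (A j : ℂ) := by
  conv_rhs => rw [← Finset.sum_range_reflect]
  refine Finset.sum_congr rfl fun j hj => ?_
  have hjn : j ≤ n := Nat.lt_succ_iff.mp (Finset.mem_range.mp hj)
  have h1 : n + 1 - 1 - j = n - j := by omega
  have h2 : n - (n - j) = j := by omega
  rw [h1, h2, Nat.choose_symm hjn]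

lemma key0 (A : ℕ → ℚ) (hA0 : A 0 = 1)
    (hA : ∀ p, 1 ≤ p → A p = ∑ j ∈ range p, (p.choose j : ℚ) * (2 ^ (p - j) - 1) * A j)
    (n : ℕ) :
    ∑ t ∈ range (n+1), (n.choose t : ℂ) * 2 ^ t * (A (n - t) : ℂ)
    - ∑ t ∈ range (n+1), (n.choose t : ℂ) * 1 ^ t * (A (n - t) : ℂ)
    = (A n : ℂ) - (if n = 0 then 1 else 0) := by
  rw [refl_sum, refl_sum]
  rcases Nat.eq_zero_or_pos n with h | h
  · subst h; simp [hA0]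
  · have hrec : (A n : ℂ) = ∑ j ∈ range n, (n.choose j : ℂ) * (2 ^ (n - j) - 1) * (A j : ℂ) := by
      exact_mod_cast congrArg (fun q : ℚ => (q : ℂ)) (hA n h)
    rw [← Finset.sum_sub_distrib]
    have e : ∀ j ∈ range (n+1), (n.choose j : ℂ) * 2 ^ (n - j) * (A j : ℂ)
        - (n.choose j : ℂ) * 1 ^ (n - j) * (A j : ℂ)
        = (n.choose j : ℂ) * (2 ^ (n - j) - 1) * (A j : ℂ) := fun j _ => by ring
    rw [Finset.sum_congr rfl e, Finset.sum_range_succ, Nat.sub_self, ← hrec, if_neg h.ne']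
    simp

lemma expand (A : ℕ → ℚ) (r : ℕ) (x c : ℂ) :
    ∑ m ∈ range (r+1), (r.choose m : ℂ) * (x + c) ^ m * (A (r - m) : ℂ)
    = ∑ s ∈ range (r+1), (r.choose s : ℂ) * x ^ s *
        ∑ t ∈ range (r - s + 1), ((r - s).choose t : ℂ) * c ^ t * (A (r - s - t) : ℂ) := by
  have step1 : ∑ m ∈ range (r+1), (r.choose m : ℂ) * (x + c) ^ m * (A (r - m) : ℂ)
      = ∑ m ∈ range (r+1), ∑ s ∈ range (m+1),
        (r.choose m : ℂ) * (x ^ s * c ^ (m - s) * (m.choose s : ℂ)) * (A (r - m) : ℂ) := by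
    refine Finset.sum_congr rfl fun m _ => ?_
    rw [add_pow, Finset.mul_sum, Finset.sum_mul]
  rw [step1]
  simp only [Finset.range_eq_Ico]
  rw [← Finset.sum_Ico_Ico_comm 0 (r+1)
    (fun s m => (r.choose m : ℂ) * (x ^ s * c ^ (m - s) * (m.choose s : ℂ)) * (A (r - m) : ℂ))]
  refine Finset.sum_congr rfl fun s hs => ?_
  have hs' : s ≤ r := by
    have := Finset.mem_Ico.mp hs; omega
  rw [Finset.sum_Ico_eq_sum_range]
  have hn : r + 1 - s = r - s + 1 := by omega
  rw [hn, Finset.mul_sum, ← Finset.range_eq_Ico]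
  refine Finset.sum_congr rfl fun t ht => ?_
  have htr : t ≤ r - s := Nat.lt_succ_iff.mp (Finset.mem_range.mp ht)
  have hst : s + t ≤ r := by omega
  have hcc : (r.choose (s+t) : ℂ) * ((s+t).choose s : ℂ)
      = (r.choose s : ℂ) * ((r-s).choose t : ℂ) := by
    have h := Nat.choose_mul (n := r) (Nat.le_add_right s t)
    have h2 : s + t - s = t := by omega
    rw [h2] at h
    exact_mod_cast congrArg (fun q : ℕ => (q : ℂ)) h
  have e1 : s + t - s = t := by omega
  have e2 : r - (s + t) = r - s - t := by omega
  rw [e1, e2]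
  calc (r.choose (s+t) : ℂ) * (x ^ s * c ^ t * ((s+t).choose s : ℂ)) * (A (r - s - t) : ℂ)
      = ((r.choose (s+t) : ℂ) * ((s+t).choose s : ℂ)) * (x ^ s * c ^ t) * (A (r - s - t) : ℂ) := by ring
    _ = ((r.choose s : ℂ) * ((r-s).choose t : ℂ)) * (x ^ s * c ^ t) * (A (r - s - t) : ℂ) := by rw [hcc]
    _ = (r.choose s : ℂ) * x ^ s * (((r-s).choose t : ℂ) * c ^ t * (A (r - s - t) : ℂ)) := by ring

lemma keyB (A : ℕ → ℚ) (hA0 : A 0 = 1)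
    (hA : ∀ p, 1 ≤ p → A p = ∑ j ∈ range p, (p.choose j : ℚ) * (2 ^ (p - j) - 1) * A j)
    (r : ℕ) (x : ℂ) :
    ∑ m ∈ range (r+1), (r.choose m : ℂ) * (x + 2) ^ m * (A (r - m) : ℂ)
    = ∑ m ∈ range (r+1), (r.choose m : ℂ) * (x + 1) ^ m * (A (r - m) : ℂ)
      + ∑ m ∈ range (r+1), (r.choose m : ℂ) * x ^ m * (A (r - m) : ℂ) - x ^ r := by
  have h2 := expand A r x 2
  have h1 := expand A r x 1
  have key : ∀ s ∈ range (r+1),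
      (r.choose s : ℂ) * x ^ s *
          (∑ t ∈ range (r-s+1), ((r-s).choose t : ℂ) * 2 ^ t * (A (r-s-t) : ℂ))
      - (r.choose s : ℂ) * x ^ s *
          (∑ t ∈ range (r-s+1), ((r-s).choose t : ℂ) * 1 ^ t * (A (r-s-t) : ℂ))
      = (r.choose s : ℂ) * x ^ s * (A (r-s) : ℂ) - (if s = r then x ^ r else 0) := by
    intro s hs
    have hsr : s ≤ r := Nat.lt_succ_iff.mp (Finset.mem_range.mp hs)
    rw [← mul_sub, key0 A hA0 hA (r-s)]
    by_cases h : s = r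
    · subst h; simp [Nat.sub_self]; ring
    · have hne : r - s ≠ 0 := by omega
      simp [hne, h]
  have hs2 : (∑ s ∈ range (r+1), (r.choose s : ℂ) * x ^ s *
          ∑ t ∈ range (r-s+1), ((r-s).choose t : ℂ) * 2 ^ t * (A (r-s-t) : ℂ))
      - (∑ s ∈ range (r+1), (r.choose s : ℂ) * x ^ s *
          ∑ t ∈ range (r-s+1), ((r-s).choose t : ℂ) * 1 ^ t * (A (r-s-t) : ℂ))
      = (∑ s ∈ range (r+1), (r.choose s : ℂ) * x ^ s * (A (r-s) : ℂ)) - x ^ r := by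
    rw [← Finset.sum_sub_distrib, Finset.sum_congr rfl key, Finset.sum_sub_distrib]
    congr 1
    simp
  linear_combination h2 - h1 + hs2

open Finset

theorem alternating_sum_formula (G : ℕ → ℂ) (hG : ∀ i, G (i + 2) = G (i + 1) + G i)
    (Abar : ℕ → ℚ) (hAbar0 : Abar 0 = 1)
    (hAbar : ∀ p, 1 ≤ p → Abar p =
      ∑ j ∈ Finset.range p, (p.choose j : ℚ) * (2 ^ (p - j) - 1) * Abar j)
    (k r : ℕ) :
    ∑ j ∈ Finset.range (k + 1), (-1 : ℂ) ^ j * (j : ℂ) ^ r * G j =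
      G 0 * ∑ m ∈ Finset.range (r + 1),
          (r.choose m : ℂ) * ((if r = m then 1 else 0) + 1) * (Abar m : ℂ)
      - G 1 * ∑ m ∈ Finset.range (r + 1), (r.choose m : ℂ) * (Abar m : ℂ)
      - (-1 : ℂ) ^ k * G k * ∑ m ∈ Finset.range (r + 1),
          (r.choose m : ℂ) * ((k : ℂ) + 2) ^ m * (Abar (r - m) : ℂ)
      + (-1 : ℂ) ^ k * G (k + 1) * ∑ m ∈ Finset.range (r + 1),
          (r.choose m : ℂ) * ((k : ℂ) + 1) ^ m * (Abar (r - m) : ℂ) := by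
  induction k with
  | zero =>
    have h2 := key0 Abar hAbar0 hAbar r
    have h1 : ∑ m ∈ range (r+1), (r.choose m : ℂ) * 1 ^ m * (Abar (r - m) : ℂ)
        = ∑ m ∈ range (r+1), (r.choose m : ℂ) * (Abar m : ℂ) := by
      rw [refl_sum]; simp
    have hδ : ∑ m ∈ range (r+1), (r.choose m : ℂ) * ((if r = m then 1 else 0) + 1) * (Abar m : ℂ)
        = (Abar r : ℂ) + ∑ m ∈ range (r+1), (r.choose m : ℂ) * (Abar m : ℂ) := by
      have e : ∀ m ∈ range (r+1),
          (r.choose m : ℂ) * ((if r = m then 1 else 0) + 1) * (Abar m : ℂ)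
          = (if m = r then (r.choose m : ℂ) * (Abar m : ℂ) else 0)
            + (r.choose m : ℂ) * (Abar m : ℂ) := by
        intro m _
        by_cases h : r = m
        · subst h; simp; ring
        · simp [h, Ne.symm h]
      rw [Finset.sum_congr rfl e, Finset.sum_add_distrib]
      simp
    simp only [Finset.sum_range_one, Nat.cast_zero, pow_zero, one_mul, zero_add] at *
    rw [hδ]
    have h0r : (0 : ℂ) ^ r = if r = 0 then 1 else 0 := by
      rcases Nat.eq_zero_or_pos r with h | h
      · subst h; simp
      · simp [h.ne', pow_eq_zero_iff]
    rw [h0r] at *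
    linear_combination G 0 * h2 + (G 0 - G 1) * h1
  | succ k ih =>
    rw [Finset.sum_range_succ, ih]
    push_cast
    have hB := keyB Abar hAbar0 hAbar r ((k : ℂ) + 1)
    rw [hB]
    have e : ((k : ℂ) + 1 + 1) = (k : ℂ) + 2 := by ring
    rw [e]
    rw [show G (k + 1 + 1) = G (k + 1) + G k from hG k]
    ring
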